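/- In the stock-market problem with 0 < ε < min(1/2, min_{1≤j≤k} q_j), let (X₁, X₂, X̂₂) have the joint distribution in which X₁ is distributed according to the stationary distribution (π_0,…,π_k) of the chain, X₂ follows the Markov transition P(x₂|x₁), and X̂₂ given (X₁, X₂) is distributed according to Table III. Then the expected per-letter distortion satisfies E[ e(X̂₂, X₁, X₂) ] = (1 − π_0) ε. -/

import Mathlib

/-!
Expected distortion of the stock-market example (equation `eq:zz1` ff.):
with `X₁` stationary, `X₂` following the chain and `X̂₂` drawn from Table III,
`E[e(X̂₂, X₁, X₂)] = (1 - π₀) ε`.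
-/

open Finset

/-- Transition matrix of the stock-market birth-death chain on `{0,…,k}`:
`i → i+1` with probability `p i`, `i → i-1` with probability `q i`,
`i → i` with probability `1 - p i - q i`. -/
noncomputable def stockTrans (k : ℕ) (p q : Fin (k + 1) → ℝ) (i j : Fin (k + 1)) : ℝ :=
  if (j : ℕ) = (i : ℕ) + 1 then p i
  else if (i : ℕ) = (j : ℕ) + 1 then q i
  else if i = j then 1 - p i - q i
  else 0

/-- The parameters of the stock chain: all transition probabilities strictly positive
where defined (no up-move from state `k`, no down-move from state `0`). -/
def IsStockChain (k : ℕ) (p q : Fin (k + 1) → ℝ) : Prop :=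
  (∀ i : Fin (k + 1), (i : ℕ) < k → 0 < p i) ∧ p (Fin.last k) = 0 ∧
    (∀ i : Fin (k + 1), 0 < (i : ℕ) → 0 < q i) ∧ q 0 = 0 ∧
    ∀ i : Fin (k + 1), 0 < 1 - p i - q i

/-- Per-letter distortion: an error occurs if the investor fails to predict a drop
(`x_i = x_{i-1} - 1` but `x̂_i = false`) or falsely predicts a drop
(`x_i ≥ x_{i-1}` but `x̂_i = true`). -/
def stockDist (k : ℕ) (b : Bool) (xp xc : Fin (k + 1)) : ℝ :=
  if (b = false ∧ (xc : ℕ) + 1 = (xp : ℕ)) ∨ (b = true ∧ (xp : ℕ) ≤ (xc : ℕ)) then 1 else 0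

/-- Table II: the reverse test channel `P(X_i = x_cur | X_{i-1} = x_prev, X̂_i = b)`. -/
noncomputable def tableII (k : ℕ) (p q : Fin (k + 1) → ℝ) (ε : ℝ)
    (xp : Fin (k + 1)) (b : Bool) (xc : Fin (k + 1)) : ℝ :=
  if (xp : ℕ) = 0 then
    (if b then 0
     else if (xc : ℕ) = 0 then 1 - p 0
     else if (xc : ℕ) = 1 then p 0
     else 0)
  else if b then
    (if (xc : ℕ) + 1 = (xp : ℕ) then 1 - ε
     else if xc = xp then ε * (1 - p xp - q xp) / (1 - q xp)
     else if (xc : ℕ) = (xp : ℕ) + 1 then ε * p xp / (1 - q xp)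
     else 0)
  else
    (if (xc : ℕ) + 1 = (xp : ℕ) then ε
     else if xc = xp then (1 - ε) * (1 - p xp - q xp) / (1 - q xp)
     else if (xc : ℕ) = (xp : ℕ) + 1 then (1 - ε) * p xp / (1 - q xp)
     else 0)

/-- `π` is a stationary distribution for the stock chain. -/
def IsStationaryDist (k : ℕ) (p q : Fin (k + 1) → ℝ) (π : Fin (k + 1) → ℝ) : Prop :=
  (∀ i, 0 ≤ π i) ∧ (∑ i, π i = 1) ∧ ∀ j, π j = ∑ i, π i * stockTrans k p q i j

/-- Table III: the probability `P(X̂₂ = 1 | x₁, x₂)`. -/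
noncomputable def tableIII (k : ℕ) (q : Fin (k + 1) → ℝ) (ε : ℝ)
    (x₁ x₂ : Fin (k + 1)) : ℝ :=
  if (x₁ : ℕ) = 0 then 0
  else if (x₂ : ℕ) + 1 = (x₁ : ℕ) then (1 - ε) * (q x₁ - ε) / (q x₁ * (1 - 2 * ε))
  else if x₂ = x₁ ∨ (x₂ : ℕ) = (x₁ : ℕ) + 1 then
    ε * (q x₁ - ε) / ((1 - q x₁) * (1 - 2 * ε))
  else 0


lemma sum_if_val (k m : ℕ) (c : ℝ) :
    ∑ x : Fin (k + 1), (if (x : ℕ) = m then c else 0) = if m ≤ k then c else 0 := by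
  by_cases h : m ≤ k
  · rw [if_pos h, Finset.sum_eq_single (⟨m, by omega⟩ : Fin (k + 1))]
    · simp
    · intro b _ hb
      exact if_neg fun hv => hb (Fin.ext hv)
    · simp
  · rw [if_neg h]
    apply Finset.sum_eq_zero
    intro x _
    have := x.isLt
    rw [if_neg (by omega)]

/-- **Expected distortion.**  Under the joint law in which `X₁ ~ π`, `X₂` follows the
Markov transition and `X̂₂` given `(X₁, X₂)` is Bernoulli with Table III success
probability, the expected per-letter distortion is `(1 - π₀) ε`. -/
theorem stock_expected_distortion
    (k : ℕ) (hk : 0 < k) (p q π : Fin (k + 1) → ℝ)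
    (hchain : IsStockChain k p q) (hπ : IsStationaryDist k p q π)
    (ε : ℝ) (hε0 : 0 < ε) (hε : ε < 1 / 2)
    (hεq : ∀ j : Fin (k + 1), 0 < (j : ℕ) → ε < q j) :
    ∑ x₁ : Fin (k + 1), ∑ x₂ : Fin (k + 1), ∑ b : Bool,
        π x₁ * stockTrans k p q x₁ x₂ *
          (if b then tableIII k q ε x₁ x₂ else 1 - tableIII k q ε x₁ x₂) *
          stockDist k b x₁ x₂ =
      (1 - π 0) * ε := by
  obtain ⟨hp, hpk, hq, hq0, hpq⟩ := hchain
  obtain ⟨hπ0, hπ1, _⟩ := hπ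
  have h2ε : (0:ℝ) < 1 - 2 * ε := by linarith
  have key : ∀ x₁ : Fin (k + 1),
      (∑ x₂ : Fin (k + 1), ∑ b : Bool,
        π x₁ * stockTrans k p q x₁ x₂ *
          (if b then tableIII k q ε x₁ x₂ else 1 - tableIII k q ε x₁ x₂) *
          stockDist k b x₁ x₂)
      = π x₁ * ε - (if (x₁ : ℕ) = 0 then π x₁ * ε else 0) := by
    intro j
    by_cases hj0 : (j : ℕ) = 0
    · rw [if_pos hj0, show π j * ε - π j * ε = 0 by ring]
      apply Finset.sum_eq_zero
      intro x₂ _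
      rw [Fintype.sum_bool]
      have ht : tableIII k q ε j x₂ = 0 := by
        unfold tableIII; rw [if_pos hj0]
      have hd : stockDist k false j x₂ = 0 := by
        unfold stockDist
        rw [if_neg]
        rintro (⟨_, h⟩ | ⟨h, _⟩)
        · omega
        · exact Bool.noConfusion h
      rw [ht, hd]
      simp
    · rw [if_neg hj0, sub_zero]
      have hjk : (j : ℕ) ≤ k := by have := j.isLt; omega
      have hn1 : 1 ≤ (j : ℕ) := by omega
      have hqj : 0 < q j := hq j (by omega)
      have hεqj : ε < q j := hεq j (by omega)
      have hpj0 : 0 ≤ p j := by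
        by_cases h : (j : ℕ) < k
        · exact (hp j h).le
        · have hjl : j = Fin.last k := Fin.ext (by simp only [Fin.val_last]; omega)
          rw [hjl, hpk]
      have hq1 : q j < 1 := by have := hpq j; linarith
      set t1 : ℝ := (1 - ε) * (q j - ε) / (q j * (1 - 2 * ε)) with ht1
      set t2 : ℝ := ε * (q j - ε) / ((1 - q j) * (1 - 2 * ε)) with ht2
      have step : ∀ x₂ : Fin (k + 1),
          (∑ b : Bool,
            π j * stockTrans k p q j x₂ *
              (if b then tableIII k q ε j x₂ else 1 - tableIII k q ε j x₂) *
              stockDist k b j x₂)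
          = (if (x₂ : ℕ) = (j : ℕ) - 1 then π j * (q j * (1 - t1)) else 0)
            + (if (x₂ : ℕ) = (j : ℕ) then π j * ((1 - p j - q j) * t2) else 0)
            + (if (x₂ : ℕ) = (j : ℕ) + 1 then π j * (p j * t2) else 0) := by
        intro x₂
        rw [Fintype.sum_bool]
        by_cases h1 : (x₂ : ℕ) + 1 = (j : ℕ)
        · have e1 : ¬((x₂ : ℕ) = (j : ℕ) + 1) := by omega
          have e4 : ¬((j : ℕ) ≤ (x₂ : ℕ)) := by omega
          have e5 : (x₂ : ℕ) = (j : ℕ) - 1 := by omega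
          have hT : stockTrans k p q j x₂ = q j := by
            unfold stockTrans; rw [if_neg e1, if_pos h1.symm]
          have hIII : tableIII k q ε j x₂ = t1 := by
            unfold tableIII; rw [if_neg hj0, if_pos h1, ht1]
          have dT : stockDist k true j x₂ = 0 := by
            unfold stockDist
            rw [if_neg]
            rintro (⟨h, _⟩ | ⟨_, h⟩)
            · exact Bool.noConfusion h
            · exact e4 h
          have dF : stockDist k false j x₂ = 1 := by
            unfold stockDist; rw [if_pos (Or.inl ⟨rfl, h1⟩)]
          rw [hT, hIII, dT, dF, if_pos e5,
            if_neg (show ¬((x₂ : ℕ) = (j : ℕ)) by omega), if_neg e1]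
          simp only [eq_self_iff_true, if_true, Bool.false_eq_true, if_false]
          ring
        · by_cases h2 : x₂ = j
          · subst h2
            have hT : stockTrans k p q x₂ x₂ = 1 - p x₂ - q x₂ := by
              unfold stockTrans
              rw [if_neg (by omega : ¬((x₂ : ℕ) = (x₂ : ℕ) + 1)),
                if_neg (by omega : ¬((x₂ : ℕ) = (x₂ : ℕ) + 1)), if_pos rfl]
            have hIII : tableIII k q ε x₂ x₂ = t2 := by
              unfold tableIII
              rw [if_neg hj0, if_neg (by omega : ¬((x₂ : ℕ) + 1 = (x₂ : ℕ))),
                if_pos (Or.inl rfl), ht2]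
            have dT : stockDist k true x₂ x₂ = 1 := by
              unfold stockDist; rw [if_pos (Or.inr ⟨rfl, le_refl _⟩)]
            have dF : stockDist k false x₂ x₂ = 0 := by
              unfold stockDist
              rw [if_neg]
              rintro (⟨_, h⟩ | ⟨h, _⟩)
              · omega
              · exact Bool.noConfusion h
            rw [hT, hIII, dT, dF, if_pos rfl,
              if_neg (by omega : ¬((x₂ : ℕ) = (x₂ : ℕ) - 1)),
              if_neg (by omega : ¬((x₂ : ℕ) = (x₂ : ℕ) + 1))]
            simp only [eq_self_iff_true, if_true, Bool.false_eq_true, if_false]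
            ring
          · by_cases h3 : (x₂ : ℕ) = (j : ℕ) + 1
            · have e2 : ¬((j : ℕ) = (x₂ : ℕ) + 1) := by omega
              have e5 : ¬((x₂ : ℕ) = (j : ℕ) - 1) := by omega
              have e6 : ¬((x₂ : ℕ) = (j : ℕ)) := by omega
              have hT : stockTrans k p q j x₂ = p j := by
                unfold stockTrans; rw [if_pos h3]
              have hIII : tableIII k q ε j x₂ = t2 := by
                unfold tableIII; rw [if_neg hj0, if_neg h1, if_pos (Or.inr h3), ht2]
              have dT : stockDist k true j x₂ = 1 := by
                unfold stockDist; rw [if_pos (Or.inr ⟨rfl, by omega⟩)]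
              have dF : stockDist k false j x₂ = 0 := by
                unfold stockDist
                rw [if_neg]
                rintro (⟨_, h⟩ | ⟨h, _⟩)
                · exact h1 h
                · exact Bool.noConfusion h
              rw [hT, hIII, dT, dF, if_neg e5, if_neg e6, if_pos h3]
              simp only [eq_self_iff_true, if_true, Bool.false_eq_true, if_false]
              ring
            · have hne : ¬((j : ℕ) = (x₂ : ℕ) + 1) := fun h => h1 h.symm
              have hT : stockTrans k p q j x₂ = 0 := by
                unfold stockTrans
                rw [if_neg h3, if_neg hne, if_neg (fun h : j = x₂ => h2 h.symm)]
              have e5 : ¬((x₂ : ℕ) = (j : ℕ) - 1) := by omega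
              have e6 : ¬((x₂ : ℕ) = (j : ℕ)) := fun h => h2 (Fin.ext h)
              rw [hT, if_neg e5, if_neg e6, if_neg h3]
              ring
      rw [Finset.sum_congr rfl fun x₂ _ => step x₂]
      rw [Finset.sum_add_distrib, Finset.sum_add_distrib, sum_if_val, sum_if_val, sum_if_val]
      rw [if_pos (by omega : (j : ℕ) - 1 ≤ k), if_pos hjk]
      have hfinal : π j * (q j * (1 - t1)) + π j * ((1 - p j - q j) * t2) + π j * (p j * t2)
          = π j * ε := by
        rw [ht1, ht2]
        have d1 : q j * (1 - 2 * ε) ≠ 0 := by positivity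
        have d2 : (1 - q j) * (1 - 2 * ε) ≠ 0 := by
          have : 0 < 1 - q j := by linarith
          positivity
        have d3 : (1 - 2 * ε) ≠ 0 := h2ε.ne'
        have d4 : q j ≠ 0 := hqj.ne'
        have d5 : 1 - q j ≠ 0 := ne_of_gt (by linarith)
        rw [div_eq_mul_inv, div_eq_mul_inv, mul_inv, mul_inv]
        have e1 : q j * (q j)⁻¹ = 1 := mul_inv_cancel₀ d4
        have e2 : (1 - q j) * (1 - q j)⁻¹ = 1 := mul_inv_cancel₀ d5
        have e3 : (1 - 2 * ε) * (1 - 2 * ε)⁻¹ = 1 := mul_inv_cancel₀ d3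
        linear_combination (-(π j * (1 - ε) * (q j - ε) * (1 - 2 * ε)⁻¹)) * e1
          + (π j * ε * (q j - ε) * (1 - 2 * ε)⁻¹) * e2 + (-(π j * (q j - ε))) * e3
      by_cases hk1 : (j : ℕ) + 1 ≤ k
      · rw [if_pos hk1]
        exact hfinal
      · rw [if_neg hk1]
        have hjl : j = Fin.last k := Fin.ext (by simp only [Fin.val_last]; omega)
        have hp0 : p j = 0 := by rw [hjl, hpk]
        rw [hp0] at hfinal ⊢
        linarith [hfinal]
  rw [Finset.sum_congr rfl fun x₁ _ => key x₁, Finset.sum_sub_distrib]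
  have h1 : ∑ x₁ : Fin (k + 1), π x₁ * ε = ε := by
    rw [← Finset.sum_mul, hπ1, one_mul]
  have h2 : ∑ x₁ : Fin (k + 1), (if (x₁ : ℕ) = 0 then π x₁ * ε else 0) = π 0 * ε := by
    have h := sum_if_val k 0 (π 0 * ε)
    rw [if_pos (Nat.zero_le k)] at h
    rw [← h]
    apply Finset.sum_congr rfl
    intro x _
    by_cases hx : (x : ℕ) = 0
    · have : x = 0 := Fin.ext hx
      simp [this]
    · simp [hx]
  rw [h1, h2]
  ring
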